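/- Let r be a positive integer and let m, n be integers with m ≥ 2r + 1 and n ≥ 2r + 1. Then the curling number of the r-th power of the tadpole graph T_{m,n} equals m + n − 2(2r − 1). -/

import Mathlib

open Finset

/-- The degree of a vertex `v` in a simple graph `G`: the number of its neighbours. -/
noncomputable def gdeg {V : Type*} (G : SimpleGraph V) (v : V) : ℕ :=
  (G.neighborSet v).ncard

/-- The curling number of a finite simple graph: the maximum number of vertices
of `G` sharing a common degree. -/
noncomputable def curlingNumber {V : Type*} [Fintype V] (G : SimpleGraph V) : ℕ :=
  Finset.univ.sup fun v => (Finset.univ.filter fun u => gdeg G u = gdeg G v).card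

/-- The `r`-th power of a simple graph `G`: same vertex set, two distinct vertices
adjacent iff their distance in `G` is (finite and) at most `r`. -/
def SimpleGraph.power {V : Type*} (G : SimpleGraph V) (r : ℕ) : SimpleGraph V where
  Adj u v := u ≠ v ∧ G.Reachable u v ∧ G.dist u v ≤ r
  symm := by
    constructor
    beta_reduce
    rintro u v ⟨h1, h2, h3⟩
    exact ⟨h1.symm, h2.symm, by rwa [SimpleGraph.dist_comm]⟩
  loopless := by
    constructor
    beta_reduce
    rintro v ⟨h1, -, -⟩
    exact h1 rfl

/-- The tadpole graph `T_{m,n}`: a cycle on `m` vertices and a path on `n` vertices,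
joined by a bridge from vertex `0` of the cycle to the end vertex `0` of the path. -/
def tadpoleGraph (m n : ℕ) : SimpleGraph (Fin m ⊕ Fin n) where
  Adj u v :=
    match u, v with
    | Sum.inl i, Sum.inl j => (SimpleGraph.cycleGraph m).Adj i j
    | Sum.inr i, Sum.inr j => (SimpleGraph.pathGraph n).Adj i j
    | Sum.inl i, Sum.inr j => (i : ℕ) = 0 ∧ (j : ℕ) = 0
    | Sum.inr i, Sum.inl j => (i : ℕ) = 0 ∧ (j : ℕ) = 0
  symm := by
    constructor
    beta_reduce
    rintro (i | i) (j | j) h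
    · exact h.symm
    · exact ⟨h.2, h.1⟩
    · exact ⟨h.2, h.1⟩
    · exact h.symm
  loopless := by
    constructor
    beta_reduce
    rintro (i | i) h
    · exact h.ne rfl
    · exact h.ne rfl

open Finset Sum

/-- absolute difference -/
def adist (a b : ℕ) : ℕ := max a b - min a b
/-- cyclic distance -/
def cdist (m a b : ℕ) : ℕ := min (adist a b) (m - adist a b)

lemma mod_small (m x : ℕ) (hx : x < 2 * m) (hm : 0 < m) :
    x % m = if x < m then x else x - m := by
  split
  · exact Nat.mod_eq_of_lt ‹_›
  · rw [Nat.mod_eq_sub_mod (by omega), Nat.mod_eq_of_lt (by omega)]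

lemma card_filter_shift (m a : ℕ) (ha : a < m) (P : ℕ → Prop) [DecidablePred P] :
    ((range m).filter fun x => P x).card = ((range m).filter fun y => P ((y + a) % m)).card := by
  apply Finset.card_nbij' (i := fun x => (x + (m - a)) % m) (j := fun y => (y + a) % m)
  · intro x hx
    simp only [mem_coe, mem_filter, mem_range] at hx ⊢
    constructor
    · exact Nat.mod_lt _ (by omega)
    · have : ((x + (m - a)) % m + a) % m = x := by
        rw [Nat.mod_add_mod, show x + (m - a) + a = x + m by omega, Nat.add_mod_right,
          Nat.mod_eq_of_lt hx.1]
      rw [this]; exact hx.2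
  · intro y hy
    simp only [mem_coe, mem_filter, mem_range] at hy ⊢
    exact ⟨Nat.mod_lt _ (by omega), hy.2⟩
  · intro x hx
    simp only [mem_coe, mem_filter, mem_range] at hx
    dsimp only
    rw [Nat.mod_add_mod, show x + (m - a) + a = x + m by omega, Nat.add_mod_right,
      Nat.mod_eq_of_lt hx.1]
  · intro y hy
    simp only [mem_coe, mem_filter, mem_range] at hy
    dsimp only
    rw [Nat.mod_add_mod, show y + a + (m - a) = y + m by omega, Nat.add_mod_right,
      Nat.mod_eq_of_lt hy.1]

lemma cdist_shift (m a x : ℕ) (ha : a < m) (hx : x < m) :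
    cdist m 0 ((x + (m - a)) % m) = cdist m a x ∧ ((x + (m - a)) % m = 0 ↔ x = a) := by
  have h := mod_small m (x + (m - a)) (by omega) (by omega)
  simp only [cdist, adist]
  rw [h]
  constructor <;> split_ifs <;> omega

/-- cycle-vertex degree in the power graph -/
def degC (m r a : ℕ) : ℕ := 2*r + (r - cdist m a 0)
/-- path-vertex degree in the power graph -/
def degP (n r j : ℕ) : ℕ := min r j + min r (n-1-j) + 2*(r-1-j) + min 1 (r-j)

lemma cntA0 (m r : ℕ) (hr : 1 ≤ r) (hm : 2*r+1 ≤ m) :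
    ((range m).filter fun y => ¬y = 0 ∧ cdist m 0 y ≤ r).card = 2*r := by
  have he : ((range m).filter fun y => ¬y = 0 ∧ cdist m 0 y ≤ r)
      = Ico 1 (r+1) ∪ Ico (m-r) m := by
    ext x
    simp only [Finset.mem_filter]
    simp only [mem_filter, mem_range, mem_union, mem_Ico, cdist, adist]
    omega
  rw [he, card_union_of_disjoint (by simp only [Finset.disjoint_left, mem_Ico]; omega)]
  rw [Nat.card_Ico, Nat.card_Ico]; omega

lemma cntC (m r a : ℕ) (hr : 1 ≤ r) (hm : 2*r+1 ≤ m) (ha : a < m) :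
    ((range m).filter fun x => ¬x = a ∧ cdist m a x ≤ r).card = 2*r := by
  rcases Nat.eq_zero_or_pos a with rfl | hapos
  · exact cntA0 m r hr hm
  · rw [← cntA0 m r hr hm,
      card_filter_shift m (m - a) (by omega) (fun y => ¬y = 0 ∧ cdist m 0 y ≤ r)]
    congr 1
    apply Finset.filter_congr
    intro x hx
    simp only [mem_range] at hx
    obtain ⟨h1, h2⟩ := cdist_shift m a x (by omega) hx
    simp only [h1, h2]

lemma cnt3 (n r c : ℕ) (hn : 2*r+1 ≤ n) :
    ((range n).filter fun x => c + 1 + x ≤ r).card = r - c := by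
  have he : ((range n).filter fun x => c + 1 + x ≤ r) = range (r - c) := by
    ext x; simp only [mem_filter, mem_range]; omega
  rw [he, card_range]

lemma cnt4 (m r j : ℕ) (hr : 1 ≤ r) (hm : 2*r+1 ≤ m) :
    ((range m).filter fun x => j + 1 + cdist m 0 x ≤ r).card
      = 2*(r-1-j) + min 1 (r-j) := by
  by_cases hj : j < r
  · have he : ((range m).filter fun x => j + 1 + cdist m 0 x ≤ r)
        = range (r - j) ∪ Ico (m - (r-1-j)) m := by
      ext x
      simp only [Finset.mem_filter]
      simp only [mem_filter, mem_range, mem_union, mem_Ico, cdist, adist]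
      omega
    rw [he, card_union_of_disjoint (by simp only [Finset.disjoint_left, mem_range, mem_Ico]; omega)]
    rw [card_range, Nat.card_Ico]; omega
  · have he : ((range m).filter fun x => j + 1 + cdist m 0 x ≤ r) = ∅ := by
      ext x
      simp only [Finset.mem_filter]
      simp only [mem_filter, mem_range, Finset.notMem_empty, iff_false, not_and, cdist, adist]
      omega
    rw [he]; simp; omega

lemma cnt5 (n r j : ℕ) (hn : 2*r+1 ≤ n) (hj : j < n) :
    ((range n).filter fun x => ¬x = j ∧ adist j x ≤ r).card
      = min r j + min r (n-1-j) := by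
  have he : ((range n).filter fun x => ¬x = j ∧ adist j x ≤ r)
      = Ico (j-r) j ∪ Ico (j+1) (min n (j+r+1)) := by
    ext x
    simp only [Finset.mem_filter]
    simp only [mem_filter, mem_range, mem_union, mem_Ico, adist, lt_min_iff]
    omega
  rw [he, card_union_of_disjoint (by simp only [Finset.disjoint_left, mem_Ico]; omega)]
  rw [Nat.card_Ico, Nat.card_Ico]; omega

lemma cntNC1 (m r : ℕ) (hr : 1 ≤ r) (hm : 2*r+1 ≤ m) :
    ((range m).filter fun x => degC m r x = 2*r).card = m - (2*r-1) := by
  have he : ((range m).filter fun x => degC m r x = 2*r) = Ico r (m - r + 1) := by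
    ext x
    simp only [Finset.mem_filter]
    simp only [mem_filter, mem_range, mem_Ico, degC, cdist, adist]
    omega
  rw [he, Nat.card_Ico]; omega

lemma cntNP1 (n r : ℕ) (hr : 1 ≤ r) (hn : 2*r+1 ≤ n) :
    ((range n).filter fun x => degP n r x = 2*r).card = n - (2*r-1) := by
  have he : ((range n).filter fun x => degP n r x = 2*r) = Ico (r-1) (n-r) := by
    ext x
    simp only [Finset.mem_filter]
    simp only [mem_filter, mem_range, mem_Ico, degP]
    omega
  rw [he, Nat.card_Ico]; omega

lemma cntNC2 (m r d : ℕ) (hr : 1 ≤ r) (hm : 2*r+1 ≤ m) (hd : d ≠ 2*r) :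
    ((range m).filter fun x => degC m r x = d).card ≤ 2 := by
  have hsub : ((range m).filter fun x => degC m r x = d) ⊆ {3*r - d, m - (3*r - d)} := by
    intro x hx
    simp only [Finset.mem_filter] at hx
    simp only [mem_filter, mem_range, degC, cdist, adist] at hx
    simp only [mem_insert, mem_singleton]
    omega
  refine (Finset.card_le_card hsub).trans ?_
  refine (Finset.card_insert_le _ _).trans ?_
  simp

lemma cntNP2 (n r d : ℕ) (hr : 1 ≤ r) (hn : 2*r+1 ≤ n) (hd : d ≠ 2*r) :
    ((range n).filter fun x => degP n r x = d).card ≤ 1 := by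
  apply Finset.card_le_one.2
  intro x hx y hy
  simp only [Finset.mem_filter] at hx hy
  simp only [mem_filter, mem_range, degP] at hx hy
  omega

/-- distance function on the tadpole graph -/
def tD (m n : ℕ) : Fin m ⊕ Fin n → Fin m ⊕ Fin n → ℕ
  | inl a, inl b => cdist m a.val b.val
  | inl a, inr b => cdist m a.val 0 + 1 + b.val
  | inr a, inl b => a.val + 1 + cdist m 0 b.val
  | inr a, inr b => adist a.val b.val

lemma cycle_adj_nat {m : ℕ} (hm : 3 ≤ m) {a b : Fin m}
    (h : (SimpleGraph.cycleGraph m).Adj a b) :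
    adist a.val b.val = 1 ∨ adist a.val b.val = m - 1 := by
  rw [SimpleGraph.cycleGraph_adj'] at h
  have e1 : (a - b).val = (m - b.val + a.val) % m := Fin.coe_sub a b
  have e2 : (b - a).val = (m - a.val + b.val) % m := Fin.coe_sub b a
  have ha := a.isLt; have hb := b.isLt
  rw [mod_small _ _ (by omega) (by omega)] at e1
  rw [mod_small _ _ (by omega) (by omega)] at e2
  simp only [adist]
  split_ifs at e1 e2 <;> rcases h with h | h <;> omega

lemma cycle_adj_succ {m : ℕ} [NeZero m] (hm : 3 ≤ m) (x : Fin m) :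
    (SimpleGraph.cycleGraph m).Adj x (x + 1) := by
  rw [SimpleGraph.cycleGraph_adj']
  right
  rw [add_sub_cancel_left, Fin.val_one', Nat.mod_eq_of_lt (by omega)]

open Fin.NatCast in
lemma walkC {m n : ℕ} [NeZero m] (hm : 3 ≤ m) (k : ℕ) (i : Fin m) :
    ∃ w : (tadpoleGraph m n).Walk (inl i) (inl (i + (k : Fin m))), w.length ≤ k := by
  induction k with
  | zero =>
    exact ⟨SimpleGraph.Walk.nil.copy rfl (by rw [Nat.cast_zero, add_zero]), by simp⟩
  | succ k ih =>
    obtain ⟨w, hw⟩ := ih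
    have hadj : (tadpoleGraph m n).Adj (inl (i + (k : Fin m))) (inl (i + (k : Fin m) + 1)) :=
      cycle_adj_succ hm _
    refine ⟨(w.concat hadj).copy rfl (by rw [Nat.cast_add, Nat.cast_one, add_assoc]), ?_⟩
    rw [SimpleGraph.Walk.length_copy, SimpleGraph.Walk.length_concat]
    omega

lemma walkP {m n : ℕ} (k : ℕ) : ∀ (a : Fin n) (h : a.val + k < n),
    ∃ w : (tadpoleGraph m n).Walk (inr a) (inr ⟨a.val + k, h⟩), w.length ≤ k := by
  induction k with
  | zero =>
    intro a h
    exact ⟨SimpleGraph.Walk.nil.copy rfl (by simp), by simp⟩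
  | succ k ih =>
    intro a h
    obtain ⟨w, hw⟩ := ih a (by omega)
    have hadj : (tadpoleGraph m n).Adj (inr ⟨a.val + k, by omega⟩) (inr ⟨a.val + (k+1), h⟩) := by
      show (SimpleGraph.pathGraph n).Adj _ _
      rw [SimpleGraph.pathGraph_adj]
      left; simp only [Fin.val_mk]; omega
    refine ⟨w.concat hadj, ?_⟩
    rw [SimpleGraph.Walk.length_concat]
    omega

open Fin.NatCast in
lemma walkCC {m n : ℕ} (hm : 3 ≤ m) (a b : Fin m) :
    ∃ w : (tadpoleGraph m n).Walk (inl a) (inl b), w.length ≤ cdist m a.val b.val := by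
  haveI : NeZero m := ⟨by omega⟩
  obtain ⟨w1, hw1⟩ := walkC (n := n) hm (b - a).val a
  obtain ⟨w2, hw2⟩ := walkC (n := n) hm (a - b).val b
  have h1 : a + ((b - a).val : Fin m) = b := by rw [Fin.cast_val_eq_self]; exact add_sub_cancel _ _
  have h2 : b + ((a - b).val : Fin m) = a := by rw [Fin.cast_val_eq_self]; exact add_sub_cancel _ _
  have e1 : (b - a).val = (m - a.val + b.val) % m := Fin.coe_sub b a
  have e2 : (a - b).val = (m - b.val + a.val) % m := Fin.coe_sub a b
  have ha := a.isLt; have hb := b.isLt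
  rw [mod_small _ _ (by omega) (by omega)] at e1
  rw [mod_small _ _ (by omega) (by omega)] at e2
  rcases le_total ((b - a).val) ((a - b).val) with hle | hle
  · refine ⟨w1.copy rfl (by rw [h1]), ?_⟩
    rw [SimpleGraph.Walk.length_copy]
    refine hw1.trans ?_
    simp only [cdist, adist]
    split_ifs at e1 e2 <;> omega
  · refine ⟨(w2.copy rfl (by rw [h2])).reverse, ?_⟩
    rw [SimpleGraph.Walk.length_reverse, SimpleGraph.Walk.length_copy]
    refine hw2.trans ?_
    simp only [cdist, adist]
    split_ifs at e1 e2 <;> omega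

lemma walkPP {m n : ℕ} (a b : Fin n) :
    ∃ w : (tadpoleGraph m n).Walk (inr a) (inr b), w.length ≤ adist a.val b.val := by
  rcases le_total a.val b.val with hle | hle
  · obtain ⟨w, hw⟩ := walkP (m := m) (b.val - a.val) a (by omega)
    refine ⟨w.copy rfl (by congr 1; exact Fin.ext (by simp; omega)), ?_⟩
    rw [SimpleGraph.Walk.length_copy]
    refine hw.trans ?_
    simp only [adist]; omega
  · obtain ⟨w, hw⟩ := walkP (m := m) (a.val - b.val) b (by omega)
    refine ⟨(w.copy rfl (by congr 1; exact Fin.ext (by simp; omega))).reverse, ?_⟩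
    rw [SimpleGraph.Walk.length_reverse, SimpleGraph.Walk.length_copy]
    refine hw.trans ?_
    simp only [adist]; omega

lemma bridge_adj {m n : ℕ} (hm : 0 < m) (hn : 0 < n) :
    (tadpoleGraph m n).Adj (inl ⟨0, hm⟩) (inr ⟨0, hn⟩) := ⟨rfl, rfl⟩

lemma walk_all {m n : ℕ} (hm : 3 ≤ m) (hn : 3 ≤ n) :
    ∀ u v, ∃ w : (tadpoleGraph m n).Walk u v, w.length ≤ tD m n u v := by
  have walkLR : ∀ (a : Fin m) (b : Fin n),
      ∃ w : (tadpoleGraph m n).Walk (inl a) (inr b), w.length ≤ cdist m a.val 0 + 1 + b.val := by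
    intro a b
    obtain ⟨w1, hw1⟩ := walkCC (n := n) hm a ⟨0, by omega⟩
    obtain ⟨w2, hw2⟩ := walkPP (m := m) (⟨0, by omega⟩ : Fin n) b
    refine ⟨w1.append (SimpleGraph.Walk.cons (bridge_adj (by omega) (by omega)) w2), ?_⟩
    rw [SimpleGraph.Walk.length_append, SimpleGraph.Walk.length_cons]
    simp only [Fin.val_mk] at hw1 hw2
    have : adist (0:ℕ) b.val = b.val := by simp [adist]
    omega
  rintro (a | a) (b | b)
  · obtain ⟨w, hw⟩ := walkCC (n := n) hm a b
    exact ⟨w, hw⟩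
  · obtain ⟨w, hw⟩ := walkLR a b
    exact ⟨w, hw⟩
  · obtain ⟨w, hw⟩ := walkLR b a
    refine ⟨w.reverse, ?_⟩
    rw [SimpleGraph.Walk.length_reverse]
    refine hw.trans ?_
    simp only [tD, cdist, adist]
    omega
  · obtain ⟨w, hw⟩ := walkPP (m := m) a b
    exact ⟨w, hw⟩

lemma tD_lip {m n : ℕ} (hm : 3 ≤ m) :
    ∀ u x v, (tadpoleGraph m n).Adj u x → tD m n u v ≤ tD m n x v + 1 := by
  rintro (a | a) (b | b) (c | c) h
  · have h' := cycle_adj_nat hm (h : (SimpleGraph.cycleGraph m).Adj a b)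
    have := a.isLt; have := b.isLt; have := c.isLt
    simp only [tD, cdist, adist] at *; omega
  · have h' := cycle_adj_nat hm (h : (SimpleGraph.cycleGraph m).Adj a b)
    have := a.isLt; have := b.isLt
    simp only [tD, cdist, adist] at *; omega
  · have h1 : (a : ℕ) = 0 := h.1
    have h2 : (b : ℕ) = 0 := h.2
    have := a.isLt; have := c.isLt
    simp only [tD, cdist, adist] at *; omega
  · have h1 : (a : ℕ) = 0 := h.1
    have h2 : (b : ℕ) = 0 := h.2
    have := a.isLt; have := c.isLt
    simp only [tD, cdist, adist] at *; omega
  · have h1 : (a : ℕ) = 0 := h.1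
    have h2 : (b : ℕ) = 0 := h.2
    have := b.isLt; have := c.isLt
    simp only [tD, cdist, adist] at *; omega
  · have h1 : (a : ℕ) = 0 := h.1
    have h2 : (b : ℕ) = 0 := h.2
    have := b.isLt; have := c.isLt
    simp only [tD, cdist, adist] at *; omega
  · have h' := (SimpleGraph.pathGraph_adj).mp (h : (SimpleGraph.pathGraph n).Adj a b)
    have := a.isLt; have := b.isLt; have := c.isLt
    simp only [tD, cdist, adist] at *; omega
  · have h' := (SimpleGraph.pathGraph_adj).mp (h : (SimpleGraph.pathGraph n).Adj a b)
    have := a.isLt; have := b.isLt; have := c.isLt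
    simp only [tD, cdist, adist] at *; omega

lemma tD_le_length {m n : ℕ} (hm : 3 ≤ m) :
    ∀ {u v} (w : (tadpoleGraph m n).Walk u v), tD m n u v ≤ w.length := by
  intro u v w
  induction w with
  | nil =>
    rename_i x
    rcases x with a | a <;> simp only [tD, cdist, adist, SimpleGraph.Walk.length_nil] <;> omega
  | cons h p ih =>
    refine le_trans (tD_lip hm _ _ _ h) ?_
    simp only [SimpleGraph.Walk.length_cons]
    omega

lemma dist_eq_tD {m n : ℕ} (hm : 3 ≤ m) (hn : 3 ≤ n) (u v : Fin m ⊕ Fin n) :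
    (tadpoleGraph m n).dist u v = tD m n u v := by
  obtain ⟨w, hw⟩ := walk_all hm hn u v
  refine le_antisymm ((SimpleGraph.dist_le w).trans hw) ?_
  obtain ⟨p, hp⟩ := SimpleGraph.Reachable.exists_walk_length_eq_dist ⟨w⟩
  calc tD m n u v ≤ p.length := tD_le_length hm p
  _ = (tadpoleGraph m n).dist u v := hp

lemma power_adj {r m n : ℕ} (hm : 3 ≤ m) (hn : 3 ≤ n) (u v : Fin m ⊕ Fin n) :
    ((tadpoleGraph m n).power r).Adj u v ↔ ¬u = v ∧ tD m n u v ≤ r := by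
  show (u ≠ v ∧ _ ∧ _) ↔ _
  constructor
  · rintro ⟨h1, _, h3⟩
    rw [dist_eq_tD hm hn] at h3
    exact ⟨h1, h3⟩
  · rintro ⟨h1, h2⟩
    obtain ⟨w, _⟩ := walk_all hm hn u v
    exact ⟨h1, ⟨w⟩, by rw [dist_eq_tD hm hn]; exact h2⟩

lemma gdeg_eq {r m n : ℕ} (hm : 3 ≤ m) (hn : 3 ≤ n) (v : Fin m ⊕ Fin n) :
    gdeg ((tadpoleGraph m n).power r) v
      = ((univ : Finset (Fin m ⊕ Fin n)).filter fun u => ¬v = u ∧ tD m n v u ≤ r).card := by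
  unfold gdeg
  have hset : ((tadpoleGraph m n).power r).neighborSet v
      = ↑((univ : Finset (Fin m ⊕ Fin n)).filter fun u => ¬v = u ∧ tD m n v u ≤ r) := by
    ext u
    simp only [SimpleGraph.mem_neighborSet, Finset.coe_filter, Set.mem_setOf_eq, mem_univ,
      true_and]
    exact power_adj hm hn v u
  rw [hset, Set.ncard_coe_finset]

lemma card_filter_sum_split {α β : Type*} [Fintype α] [Fintype β]
    (p : α ⊕ β → Prop) [DecidablePred p] :
    ((univ : Finset (α ⊕ β)).filter p).card
      = ((univ : Finset α).filter fun a => p (inl a)).card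
        + ((univ : Finset β).filter fun b => p (inr b)).card := by
  have hL : ((univ : Finset (α ⊕ β)).filter p).toLeft = univ.filter (fun a => p (inl a)) := by
    ext a; simp
  have hR : ((univ : Finset (α ⊕ β)).filter p).toRight = univ.filter (fun b => p (inr b)) := by
    ext b; simp
  rw [← Finset.card_toLeft_add_card_toRight, hL, hR]

lemma card_filter_fin (m : ℕ) (P : ℕ → Prop) [DecidablePred P] :
    ((univ : Finset (Fin m)).filter fun i => P i.val).card = ((range m).filter P).card := by
  have h1 : (univ : Finset (Fin m)).map Fin.valEmbedding = range m := by
    rw [Fin.map_valEmbedding_univ]; exact Nat.Iio_eq_range m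
  rw [← h1, Finset.filter_map, Finset.card_map]
  rfl

/-- the degree function of the power of the tadpole graph -/
def degT (m n r : ℕ) : Fin m ⊕ Fin n → ℕ
  | inl a => degC m r a.val
  | inr j => degP n r j.val

lemma gdeg_formula {r m n : ℕ} (hr : 1 ≤ r) (hm : 2*r+1 ≤ m) (hn : 2*r+1 ≤ n)
    (v : Fin m ⊕ Fin n) :
    gdeg ((tadpoleGraph m n).power r) v = degT m n r v := by
  have hm3 : 3 ≤ m := by omega
  have hn3 : 3 ≤ n := by omega
  rw [gdeg_eq hm3 hn3, card_filter_sum_split]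
  rcases v with a | j
  · have e1 : ((univ : Finset (Fin m)).filter fun b => ¬(inl a : Fin m ⊕ Fin n) = inl b ∧ tD m n (inl a) (inl b) ≤ r)
        = (univ : Finset (Fin m)).filter fun b => ¬b.val = a.val ∧ cdist m a.val b.val ≤ r := by
      apply Finset.filter_congr
      intro b _
      simp only [tD, Sum.inl.injEq, Fin.ext_iff]
      omega
    have e2 : ((univ : Finset (Fin n)).filter fun k => ¬(inl a : Fin m ⊕ Fin n) = inr k ∧ tD m n (inl a) (inr k) ≤ r)
        = (univ : Finset (Fin n)).filter fun k => cdist m a.val 0 + 1 + k.val ≤ r := by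
      apply Finset.filter_congr
      intro k _
      simp only [tD]
      simp
    rw [e1, e2, card_filter_fin m (fun x => ¬x = a.val ∧ cdist m a.val x ≤ r),
      card_filter_fin n (fun x => cdist m a.val 0 + 1 + x ≤ r),
      cntC m r a.val hr hm a.isLt, cnt3 n r (cdist m a.val 0) hn]
    simp only [degT, degC]
  · have e1 : ((univ : Finset (Fin m)).filter fun b => ¬(inr j : Fin m ⊕ Fin n) = inl b ∧ tD m n (inr j) (inl b) ≤ r)
        = (univ : Finset (Fin m)).filter fun b => j.val + 1 + cdist m 0 b.val ≤ r := by
      apply Finset.filter_congr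
      intro b _
      simp only [tD]
      simp
    have e2 : ((univ : Finset (Fin n)).filter fun k => ¬(inr j : Fin m ⊕ Fin n) = inr k ∧ tD m n (inr j) (inr k) ≤ r)
        = (univ : Finset (Fin n)).filter fun k => ¬k.val = j.val ∧ adist j.val k.val ≤ r := by
      apply Finset.filter_congr
      intro k _
      simp only [tD, Sum.inr.injEq, Fin.ext_iff]
      omega
    rw [e1, e2, card_filter_fin m (fun x => j.val + 1 + cdist m 0 x ≤ r),
      card_filter_fin n (fun x => ¬x = j.val ∧ adist j.val x ≤ r),
      cnt4 m r j.val hr hm, cnt5 n r j.val hn j.isLt]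
    simp only [degT, degP]
    omega

theorem curlingNumber_tadpoleGraph_power' (r m n : ℕ) (hr : 1 ≤ r)
    (hm : 2 * r + 1 ≤ m) (hn : 2 * r + 1 ≤ n) :
    curlingNumber ((tadpoleGraph m n).power r) = m + n - 2 * (2 * r - 1) := by
  have hm3 : 3 ≤ m := by omega
  have hn3 : 3 ≤ n := by omega
  unfold curlingNumber
  have hfix : ∀ v : Fin m ⊕ Fin n,
      ((univ : Finset (Fin m ⊕ Fin n)).filter fun u =>
          gdeg ((tadpoleGraph m n).power r) u = gdeg ((tadpoleGraph m n).power r) v).card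
        = ((range m).filter fun x => degC m r x = degT m n r v).card
          + ((range n).filter fun x => degP n r x = degT m n r v).card := by
    intro v
    have e0 : ((univ : Finset (Fin m ⊕ Fin n)).filter fun u =>
          gdeg ((tadpoleGraph m n).power r) u = gdeg ((tadpoleGraph m n).power r) v)
        = (univ : Finset (Fin m ⊕ Fin n)).filter fun u => degT m n r u = degT m n r v := by
      apply Finset.filter_congr
      intro u _
      rw [gdeg_formula hr hm hn u, gdeg_formula hr hm hn v]
    rw [e0, card_filter_sum_split]
    congr 1
    · exact card_filter_fin m (fun x => degC m r x = degT m n r v)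
    · exact card_filter_fin n (fun x => degP n r x = degT m n r v)
  apply le_antisymm
  · apply Finset.sup_le
    intro v _
    rw [hfix v]
    by_cases hd : degT m n r v = 2*r
    · rw [hd, cntNC1 m r hr hm, cntNP1 n r hr hn]; omega
    · have h1 := cntNC2 m r _ hr hm hd
      have h2 := cntNP2 n r _ hr hn hd
      omega
  · have hv0 : degT m n r (inl ⟨r, by omega⟩ : Fin m ⊕ Fin n) = 2*r := by
      simp only [degT, degC, cdist, adist, Fin.val_mk]
      omega
    have hM : m + n - 2*(2*r-1)
        = ((univ : Finset (Fin m ⊕ Fin n)).filter fun u =>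
            gdeg ((tadpoleGraph m n).power r) u
              = gdeg ((tadpoleGraph m n).power r) (inl ⟨r, by omega⟩)).card := by
      rw [hfix, hv0, cntNC1 m r hr hm, cntNP1 n r hr hn]; omega
    rw [hM]
    exact Finset.le_sup
      (f := fun v => ((univ : Finset (Fin m ⊕ Fin n)).filter fun u =>
        gdeg ((tadpoleGraph m n).power r) u = gdeg ((tadpoleGraph m n).power r) v).card)
      (mem_univ (inl ⟨r, by omega⟩ : Fin m ⊕ Fin n))

/-- For `r ≥ 1` and `m, n ≥ 2r + 1`, the curling number of the `r`-th power
of the tadpole graph `T_{m,n}` is `m + n - 2(2r - 1)`. -/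
theorem curlingNumber_tadpoleGraph_power (r m n : ℕ) (hr : 1 ≤ r)
    (hm : 2 * r + 1 ≤ m) (hn : 2 * r + 1 ≤ n) :
    curlingNumber ((tadpoleGraph m n).power r) = m + n - 2 * (2 * r - 1) := by
  exact curlingNumber_tadpoleGraph_power' r m n hr hm hn
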